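/- Let n and r be positive natural numbers and let X be a finite set of nonzero vectors in 𝔽₂ⁿ. If H is a matrix chosen uniformly at random from all r × n matrices over 𝔽₂ and N := |{x ∈ X : H·x = 0}|, then the variance of N is at most its expectation: Var(N) ≤ E(N). (The covariance terms vanish because, for distinct nonzero x, y ∈ 𝔽₂ⁿ, the events {H·x = 0} and {H·y = 0} are independent.) -/

import Mathlib

open Finset Function

/-- Fiber counting for surjective additive homs between finite groups. -/
lemma fiber_count {A B : Type*} [AddCommGroup A] [AddCommGroup B] [Fintype A] [Fintype B]
    [DecidableEq B] (f : A →+ B) (hf : Surjective f) :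
    (univ.filter (fun x => f x = 0)).card * Fintype.card B = Fintype.card A := by
  classical
  have h1 : Nat.card A = Nat.card (A ⧸ f.ker) * Nat.card f.ker :=
    AddSubgroup.card_eq_card_quotient_mul_card_addSubgroup f.ker
  have h2 : Nat.card (A ⧸ f.ker) = Nat.card B :=
    Nat.card_congr (QuotientAddGroup.quotientKerEquivOfSurjective f hf).toEquiv
  have h3 : Nat.card f.ker = (univ.filter (fun x => f x = 0)).card := by
    rw [Nat.card_eq_fintype_card, Fintype.card_subtype]
    congr 1
    ext x
    simp [AddMonoidHom.mem_ker]
  rw [Nat.card_eq_fintype_card, Nat.card_eq_fintype_card] at h1 h2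
  rw [h1, h2, h3, Nat.mul_comm]

lemma row_surj1 {n : ℕ} {v : Fin n → ZMod 2} (hv : v ≠ 0) :
    Surjective (fun u : Fin n → ZMod 2 => dotProduct u v) := by
  obtain ⟨j, hj⟩ : ∃ j, v j ≠ 0 := by
    by_contra h; push_neg at h; exact hv (funext h)
  have hj1 : v j = 1 := by revert hj; generalize v j = x; revert x; decide
  intro a
  exact ⟨Pi.single j a, by simp [single_dotProduct, hj1]⟩

lemma row_surj2 {n : ℕ} {v w : Fin n → ZMod 2} (hv : v ≠ 0) (hw : w ≠ 0) (hvw : v ≠ w) :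
    Surjective (fun u : Fin n → ZMod 2 =>
      (dotProduct u v, dotProduct u w)) := by
  obtain ⟨j, hj⟩ : ∃ j, v j ≠ w j := by
    by_contra h; push_neg at h; exact hvw (funext h)
  rintro ⟨a, b⟩
  have hcase : (v j = 1 ∧ w j = 0) ∨ (v j = 0 ∧ w j = 1) := by
    revert hj; generalize v j = x; generalize w j = y; revert x y; decide
  rcases hcase with ⟨h1, h2⟩ | ⟨h1, h2⟩
  · obtain ⟨k, hk⟩ : ∃ k, w k ≠ 0 := by
      by_contra h; push_neg at h; exact hw (funext h)
    have hk1 : w k = 1 := by revert hk; generalize w k = x; revert x; decide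
    refine ⟨Pi.single k b + Pi.single j (a - b * v k), ?_⟩
    simp only [add_dotProduct, single_dotProduct, h1, h2, hk1,
      Prod.mk.injEq]
    constructor <;> ring
  · obtain ⟨k, hk⟩ : ∃ k, v k ≠ 0 := by
      by_contra h; push_neg at h; exact hv (funext h)
    have hk1 : v k = 1 := by revert hk; generalize v k = x; revert x; decide
    refine ⟨Pi.single k a + Pi.single j (b - a * w k), ?_⟩
    simp only [add_dotProduct, single_dotProduct, h1, h2, hk1,
      Prod.mk.injEq]
    constructor <;> ring

/-- The hom `H ↦ H.mulVec v`. -/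
def mvHom (r n : ℕ) (v : Fin n → ZMod 2) :
    Matrix (Fin r) (Fin n) (ZMod 2) →+ (Fin r → ZMod 2) where
  toFun H := H.mulVec v
  map_zero' := by simp [Matrix.zero_mulVec]
  map_add' A B := Matrix.add_mulVec A B v

/-- The hom `H ↦ (H.mulVec v, H.mulVec w)`. -/
def mvHom2 (r n : ℕ) (v w : Fin n → ZMod 2) :
    Matrix (Fin r) (Fin n) (ZMod 2) →+ (Fin r → ZMod 2) × (Fin r → ZMod 2) where
  toFun H := (H.mulVec v, H.mulVec w)
  map_zero' := by simp [Matrix.zero_mulVec]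
  map_add' A B := by simp [Matrix.add_mulVec, Prod.ext_iff]

lemma count1 {r n : ℕ} {v : Fin n → ZMod 2} (hv : v ≠ 0) :
    (univ.filter (fun H : Matrix (Fin r) (Fin n) (ZMod 2) => H.mulVec v = 0)).card *
      Fintype.card (Fin r → ZMod 2) = Fintype.card (Matrix (Fin r) (Fin n) (ZMod 2)) := by
  refine fiber_count (mvHom r n v) ?_
  intro t
  choose u hu using row_surj1 hv
  refine ⟨Matrix.of (fun i => u (t i)), ?_⟩
  funext i
  exact hu (t i)

lemma count2 {r n : ℕ} {v w : Fin n → ZMod 2} (hv : v ≠ 0) (hw : w ≠ 0) (hvw : v ≠ w) :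
    (univ.filter (fun H : Matrix (Fin r) (Fin n) (ZMod 2) =>
        H.mulVec v = 0 ∧ H.mulVec w = 0)).card *
      (Fintype.card (Fin r → ZMod 2) * Fintype.card (Fin r → ZMod 2)) =
      Fintype.card (Matrix (Fin r) (Fin n) (ZMod 2)) := by
  classical
  have key := fiber_count (mvHom2 r n v w) (by
    rintro ⟨s, t⟩
    choose u hu using row_surj2 hv hw hvw
    refine ⟨Matrix.of (fun i => u (s i, t i)), ?_⟩
    have h1 : ∀ i, dotProduct (u (s i, t i)) v = s i := fun i =>
      congrArg Prod.fst (hu (s i, t i))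
    have h2 : ∀ i, dotProduct (u (s i, t i)) w = t i := fun i =>
      congrArg Prod.snd (hu (s i, t i))
    refine Prod.ext (funext fun i => h1 i) (funext fun i => h2 i))
  rw [Fintype.card_prod] at key
  rw [← key]
  congr 2
  ext H
  simp [mvHom2, Prod.ext_iff]

/-- Let `N(H)` count the elements of a finite set `X` of nonzero vectors of
`𝔽₂ⁿ` lying in `ker H`, for `H` a uniformly random `r × n` matrix over `𝔽₂`. Then the
variance of `N` is at most its expectation: `Var(N) ≤ E(N)`. -/
theorem variance_le_expectation_random_code (n r : ℕ) (hn : 0 < n) (hr : 0 < r)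
    (X : Finset (Fin n → ZMod 2)) (hX : ∀ v ∈ X, v ≠ 0)
    (N : Matrix (Fin r) (Fin n) (ZMod 2) → ℝ)
    (hN : ∀ H, N H = ((X.filter (fun v => H.mulVec v = 0)).card : ℝ))
    (E V : ℝ)
    (hE : E = (∑ H : Matrix (Fin r) (Fin n) (ZMod 2), N H) /
      (Fintype.card (Matrix (Fin r) (Fin n) (ZMod 2)) : ℝ))
    (hV : V = (∑ H : Matrix (Fin r) (Fin n) (ZMod 2), (N H - E) ^ 2) /
      (Fintype.card (Matrix (Fin r) (Fin n) (ZMod 2)) : ℝ)) :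
    V ≤ E := by
  classical
  set m : ℝ := (Fintype.card (Matrix (Fin r) (Fin n) (ZMod 2)) : ℝ) with hm_def
  set k : ℝ := (Fintype.card (Fin r → ZMod 2) : ℝ) with hk_def
  have hm : (0:ℝ) < m := by rw [hm_def]; exact_mod_cast Fintype.card_pos
  have hk : (0:ℝ) < k := by rw [hk_def]; exact_mod_cast Fintype.card_pos
  set c : ℝ := (X.card : ℝ) with hc_def
  have hc0 : (0:ℝ) ≤ c := by rw [hc_def]; positivity
  -- single counting, cast to ℝ
  have hc1 : ∀ v ∈ X,
      ((univ.filter (fun H : Matrix (Fin r) (Fin n) (ZMod 2) => H.mulVec v = 0)).card : ℝ)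
        = m / k := by
    intro v hv
    rw [eq_div_iff hk.ne', hm_def, hk_def]
    exact_mod_cast count1 (hX v hv)
  have hc2 : ∀ v ∈ X, ∀ w ∈ X, w ≠ v →
      ((univ.filter (fun H : Matrix (Fin r) (Fin n) (ZMod 2) =>
          H.mulVec v = 0 ∧ H.mulVec w = 0)).card : ℝ) = m / (k * k) := by
    intro v hv w hw hwv
    rw [eq_div_iff (by positivity), hm_def, hk_def]
    exact_mod_cast count2 (hX v hv) (hX w hw) (Ne.symm hwv)
  -- indicator form of N
  have hNi : ∀ H, N H = ∑ v ∈ X, (if H.mulVec v = 0 then (1:ℝ) else 0) := by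
    intro H
    rw [hN H, Finset.sum_boole]
  -- first moment
  have hS : (∑ H : Matrix (Fin r) (Fin n) (ZMod 2), N H) = c * (m / k) := by
    calc (∑ H : Matrix (Fin r) (Fin n) (ZMod 2), N H)
        = ∑ H : Matrix (Fin r) (Fin n) (ZMod 2), ∑ v ∈ X,
            (if H.mulVec v = 0 then (1:ℝ) else 0) := by
          exact Finset.sum_congr rfl fun H _ => hNi H
      _ = ∑ v ∈ X, ∑ H : Matrix (Fin r) (Fin n) (ZMod 2),
            (if H.mulVec v = 0 then (1:ℝ) else 0) := Finset.sum_comm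
      _ = ∑ v ∈ X, (m / k) := by
          refine Finset.sum_congr rfl fun v hv => ?_
          rw [Finset.sum_boole]
          exact hc1 v hv
      _ = c * (m / k) := by rw [Finset.sum_const, nsmul_eq_mul, hc_def]
  -- second moment
  have hS2 : (∑ H : Matrix (Fin r) (Fin n) (ZMod 2), (N H) ^ 2)
      = c * (m / k) + c * (c - 1) * (m / (k * k)) := by
    have step : ∀ H : Matrix (Fin r) (Fin n) (ZMod 2), (N H) ^ 2
        = ∑ v ∈ X, ∑ w ∈ X, (if H.mulVec v = 0 ∧ H.mulVec w = 0 then (1:ℝ) else 0) := by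
      intro H
      rw [hNi H, sq, Finset.sum_mul_sum]
      refine Finset.sum_congr rfl fun v _ => Finset.sum_congr rfl fun w _ => ?_
      by_cases h1 : H.mulVec v = 0 <;> by_cases h2 : H.mulVec w = 0 <;> simp [h1, h2]
    calc (∑ H : Matrix (Fin r) (Fin n) (ZMod 2), (N H) ^ 2)
        = ∑ H : Matrix (Fin r) (Fin n) (ZMod 2), ∑ v ∈ X, ∑ w ∈ X,
            (if H.mulVec v = 0 ∧ H.mulVec w = 0 then (1:ℝ) else 0) :=
          Finset.sum_congr rfl fun H _ => step H
      _ = ∑ v ∈ X, ∑ w ∈ X, ∑ H : Matrix (Fin r) (Fin n) (ZMod 2),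
            (if H.mulVec v = 0 ∧ H.mulVec w = 0 then (1:ℝ) else 0) := by
          rw [Finset.sum_comm]
          exact Finset.sum_congr rfl fun v _ => Finset.sum_comm
      _ = ∑ v ∈ X, ∑ w ∈ X,
            ((univ.filter (fun H : Matrix (Fin r) (Fin n) (ZMod 2) =>
              H.mulVec v = 0 ∧ H.mulVec w = 0)).card : ℝ) := by
          exact Finset.sum_congr rfl fun v _ => Finset.sum_congr rfl fun w _ =>
            Finset.sum_boole _ _
      _ = ∑ v ∈ X, ((m / k) + (c - 1) * (m / (k * k))) := by
          refine Finset.sum_congr rfl fun v hv => ?_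
          rw [← Finset.add_sum_erase X _ hv]
          congr 1
          · simp only [and_self]
            exact hc1 v hv
          · calc (∑ w ∈ X.erase v,
                ((univ.filter (fun H : Matrix (Fin r) (Fin n) (ZMod 2) =>
                  H.mulVec v = 0 ∧ H.mulVec w = 0)).card : ℝ))
                = ∑ w ∈ X.erase v, (m / (k * k)) := by
                  refine Finset.sum_congr rfl fun w hw => ?_
                  exact hc2 v hv w (Finset.mem_of_mem_erase hw) (Finset.ne_of_mem_erase hw)
              _ = (c - 1) * (m / (k * k)) := by
                  rw [Finset.sum_const, nsmul_eq_mul, hc_def,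
                    Finset.cast_card_erase_of_mem hv]
      _ = c * ((m / k) + (c - 1) * (m / (k * k))) := by
          rw [Finset.sum_const, nsmul_eq_mul, hc_def]
      _ = c * (m / k) + c * (c - 1) * (m / (k * k)) := by ring
  -- expectation value
  have hEval : E = c / k := by
    rw [hE, hS]
    field_simp
  -- variance expansion
  have expand : (∑ H : Matrix (Fin r) (Fin n) (ZMod 2), (N H - E) ^ 2)
      = (∑ H : Matrix (Fin r) (Fin n) (ZMod 2), (N H) ^ 2)
        - 2 * E * (∑ H : Matrix (Fin r) (Fin n) (ZMod 2), N H) + m * E ^ 2 := by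
    have : ∀ H : Matrix (Fin r) (Fin n) (ZMod 2),
        (N H - E) ^ 2 = (N H) ^ 2 - 2 * E * N H + E ^ 2 := fun H => by ring
    rw [Finset.sum_congr rfl fun H _ => this H, Finset.sum_add_distrib,
      Finset.sum_sub_distrib, Finset.sum_const, ← Finset.mul_sum, nsmul_eq_mul,
      Finset.card_univ, ← hm_def]
  have hVval : V = c / k - c / (k * k) := by
    rw [hV, expand, hS2, hS, hEval]
    field_simp
    ring
  rw [hVval, hEval]
  have : (0:ℝ) ≤ c / (k * k) := by positivity
  linarith
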